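/- Let n ≥ 1 and let v be an n-dimensional unit vector all of whose entries lie in ℤ[1/(i√2)] = {x₀ + x₁·i√2 : x₀, x₁ ∈ ℤ[1/2]}, with lde_{i√2}(v) > 0. Then there exist finitely many generators G₁, …, G_ℓ, each taken from the set {(-1)_[a], X_[a,b], F_[a,b] : a, b distinct elements of {1,…,n}}, such that v' = G₁ ⋯ G_ℓ v satisfies lde_{i√2}(v') < lde_{i√2}(v). -/

import Mathlib

open Matrix Complex

noncomputable section

/-- The `m`-level operator of type `W` with indices `f 0, …, f (m-1)`:
for injective `f`, its `(f j', f k')` entry is `W j' k'` and it agrees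
with the identity matrix elsewhere. -/
def levelOp {n m : ℕ} (f : Fin m → Fin n) (W : Matrix (Fin m) (Fin m) ℂ) :
    Matrix (Fin n) (Fin n) ℂ := fun j k =>
  (∑ j' : Fin m, ∑ k' : Fin m, if f j' = j ∧ f k' = k then W j' k' else 0) +
  (if j = k ∧ ∀ j' : Fin m, f j' ≠ j then 1 else 0)

/-- The NOT gate `X`. -/
def Xmat : Matrix (Fin 2) (Fin 2) ℂ := !![0, 1; 1, 0]

/-- The Hadamard gate `H`. -/
def Hmat : Matrix (Fin 2) (Fin 2) ℂ := (Real.sqrt 2 : ℂ)⁻¹ • !![1, 1; 1, -1]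

/-- The gate `F = (1/2)[[1+i√2, 1],[1, -1+i√2]]`. -/
def Fmat : Matrix (Fin 2) (Fin 2) ℂ :=
  (2 : ℂ)⁻¹ • !![1 + Complex.I * Real.sqrt 2, 1; 1, -1 + Complex.I * Real.sqrt 2]

/-- `G` is one of the generators `(-1)_[a]`, `X_[a,b]`, `F_[a,b]` with `a ≠ b`. -/
def IsImGen {n : ℕ} (G : Matrix (Fin n) (Fin n) ℂ) : Prop :=
  (∃ a : Fin n, G = levelOp ![a] !![-1]) ∨
  (∃ a b : Fin n, a ≠ b ∧ G = levelOp ![a, b] Xmat) ∨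
  (∃ a b : Fin n, a ≠ b ∧ G = levelOp ![a, b] Fmat)

/-- `x` is a dyadic fraction: an element of `ℤ[1/2]` (viewed inside `ℂ`). -/
def IsDyadic (x : ℂ) : Prop := ∃ (u : ℤ) (q : ℕ), x = (u : ℂ) / 2 ^ q

/-- `x` belongs to the ring `ℤ[1/(i√2)] = {x₀ + x₁·i√2 : x₀, x₁ ∈ ℤ[1/2]}`. -/
def InDIrt2 (x : ℂ) : Prop :=
  ∃ x₀ x₁ : ℂ, IsDyadic x₀ ∧ IsDyadic x₁ ∧ x = x₀ + x₁ * (Complex.I * Real.sqrt 2)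

/-- The least i√2-denominator exponent of a vector `v` with entries in
`ℤ[1/(i√2)]`: the least `q : ℕ` such that `(i√2)^q · v` has entries in `ℤ[i√2]`. -/
def ldeIrt2 {n : ℕ} (v : Fin n → ℂ) : ℕ :=
  sInf {q : ℕ | ∀ j, ∃ a b : ℤ,
    (Complex.I * Real.sqrt 2) ^ q * v j = (a : ℂ) + (b : ℂ) * (Complex.I * Real.sqrt 2)}

def cs : ℂ := Complex.I * Real.sqrt 2

lemma cs_sq : cs ^ 2 = -2 := by
  have h2 : ((Real.sqrt 2 : ℝ) : ℂ) ^ 2 = 2 := by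
    rw [← Complex.ofReal_pow, Real.sq_sqrt (by norm_num : (2:ℝ) ≥ 0)]
    norm_num
  simp [cs, mul_pow, Complex.I_sq, h2]

lemma cs_ne : cs ≠ 0 := by
  have : Real.sqrt 2 ≠ 0 := ne_of_gt (Real.sqrt_pos.mpr (by norm_num))
  exact mul_ne_zero Complex.I_ne_zero (by exact_mod_cast Complex.ofReal_ne_zero.mpr this)

lemma Fmat00 : Fmat 0 0 = 2⁻¹ * (1 + cs) := by simp [Fmat, cs]

lemma Fmat01 : Fmat 0 1 = 2⁻¹ := by simp [Fmat]

lemma Fmat10 : Fmat 1 0 = 2⁻¹ := by simp [Fmat]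

lemma Fmat11 : Fmat 1 1 = 2⁻¹ * (-1 + cs) := by simp [Fmat, cs]

lemma lin2 {p : ℕ} {vj vk Aj Ak : ℂ} (hj : cs ^ p * vj = Aj) (hk : cs ^ p * vk = Ak)
    (x y : ℂ) : cs ^ p * (x * vj + y * vk) = x * Aj + y * Ak := by
  rw [← hj, ← hk]; ring

lemma mulVec_levelOp_two {n : ℕ} (a b : Fin n) (hab : a ≠ b)
    (W : Matrix (Fin 2) (Fin 2) ℂ) (v : Fin n → ℂ) (l : Fin n) :
    (levelOp ![a,b] W).mulVec v l =
      if l = a then W 0 0 * v a + W 0 1 * v b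
      else if l = b then W 1 0 * v a + W 1 1 * v b else v l := by
  unfold levelOp Matrix.mulVec dotProduct
  simp only [Fin.sum_univ_two, Matrix.cons_val_zero, Matrix.cons_val_one, Matrix.head_cons,
    Fin.forall_fin_two]
  rcases eq_or_ne l a with rfl | hla
  · simp [hab.symm, Finset.sum_add_distrib, add_mul, ite_and, Finset.sum_ite_eq]
  · rcases eq_or_ne l b with rfl | hlb
    · simp [hab, hla, hla.symm, Finset.sum_add_distrib, add_mul, ite_and, Finset.sum_ite_eq]
    · simp [hla.symm, hlb.symm, hla, hlb, Finset.sum_add_distrib, add_mul, ite_and,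
        Finset.sum_ite_eq]

lemma pairF {n : ℕ} {p : ℕ} (j k : Fin n) (hjk : j ≠ k) (v : Fin n → ℂ) (a b : Fin n → ℤ)
    (hv : ∀ l, cs ^ p * v l = a l + b l * cs)
    (hja : Odd (a j)) (hka : Odd (a k)) (hodd : Odd (b j + b k))
    (h4 : (4:ℤ) ∣ (a j + a k + 2 * b j)) :
    ∃ a' b' : Fin n → ℤ,
      (∀ l, cs ^ p * ((levelOp ![j,k] Fmat).mulVec v) l = a' l + b' l * cs) ∧
      Even (a' j) ∧ Even (a' k) ∧ ∀ l, l ≠ j → l ≠ k → a' l = a l ∧ b' l = b l := by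
  obtain ⟨mj, hmj⟩ := hja
  obtain ⟨mk, hmk⟩ := hka
  obtain ⟨mb, hmb⟩ := hodd
  obtain ⟨t, ht⟩ := h4
  have hbj : b j = 2*t - mj - mk - 1 := by omega
  have hbk : b k = 2*mb + 2 + mj + mk - 2*t := by omega
  refine ⟨(fun l => if l = j then 2*mj + 2*mk + 2 - 2*t else if l = k then 2*t - 2*mk - 2*mb - 2 else a l),
          (fun l => if l = j then mj + mb + 1 else if l = k then 2*t - mj - mb - 1 else b l),
          ?_, ?_, ?_, ?_⟩
  · intro l
    rw [mulVec_levelOp_two j k hjk]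
    rcases eq_or_ne l j with rfl | hlj
    · simp only [if_pos rfl, ite_true, Fmat00, Fmat01]
      rw [lin2 (hv l) (hv k)]
      have pj : (a l : ℂ) = 2*(mj:ℂ) + 1 := by exact_mod_cast congrArg (Int.cast : ℤ → ℂ) hmj
      have pk : (a k : ℂ) = 2*(mk:ℂ) + 1 := by exact_mod_cast congrArg (Int.cast : ℤ → ℂ) hmk
      have pbj : (b l : ℂ) = 2*(t:ℂ) - mj - mk - 1 := by
        exact_mod_cast congrArg (Int.cast : ℤ → ℂ) hbj
      have pbk : (b k : ℂ) = 2*(mb:ℂ) + 2 + mj + mk - 2*t := by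
        exact_mod_cast congrArg (Int.cast : ℤ → ℂ) hbk
      rw [pj, pk, pbj, pbk]
      push_cast
      linear_combination ((2*(t:ℂ) - mj - mk - 1)/2) * cs_sq
    · rcases eq_or_ne l k with rfl | hlk
      · simp only [if_neg hlj, if_pos rfl, ite_true, Fmat10, Fmat11]
        rw [lin2 (hv j) (hv l)]
        have pj : (a j : ℂ) = 2*(mj:ℂ) + 1 := by exact_mod_cast congrArg (Int.cast : ℤ → ℂ) hmj
        have pk : (a l : ℂ) = 2*(mk:ℂ) + 1 := by exact_mod_cast congrArg (Int.cast : ℤ → ℂ) hmk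
        have pbj : (b j : ℂ) = 2*(t:ℂ) - mj - mk - 1 := by
          exact_mod_cast congrArg (Int.cast : ℤ → ℂ) hbj
        have pbk : (b l : ℂ) = 2*(mb:ℂ) + 2 + mj + mk - 2*t := by
          exact_mod_cast congrArg (Int.cast : ℤ → ℂ) hbk
        rw [pj, pk, pbj, pbk]
        push_cast
        linear_combination ((2*(mb:ℂ) + 2 + mj + mk - 2*t)/2) * cs_sq
      · simp only [if_neg hlj, if_neg hlk]
        exact hv l
  · simp only [if_pos rfl, ite_true]
    exact ⟨mj + mk + 1 - t, by ring⟩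
  · simp only [if_neg hjk.symm, if_pos rfl, ite_true]
    exact ⟨t - mk - mb - 1, by ring⟩
  · intro l hlj hlk
    simp [hlj, hlk]

lemma lin4 {p : ℕ} {vj vk Aj Ak : ℂ} (hj : cs ^ p * vj = Aj) (hk : cs ^ p * vk = Ak)
    (x1 x2 x3 x4 x5 x6 : ℂ) :
    cs ^ p * (x1 * (x2 * vj + x3 * vk) + x4 * (x5 * vj + x6 * vk)) =
      x1 * (x2 * Aj + x3 * Ak) + x4 * (x5 * Aj + x6 * Ak) := by
  rw [← hj, ← hk]; ring

lemma pairFF {n : ℕ} {p : ℕ} (j k : Fin n) (hjk : j ≠ k) (v : Fin n → ℂ) (a b : Fin n → ℤ)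
    (hv : ∀ l, cs ^ p * v l = a l + b l * cs)
    (hja : Odd (a j)) (hka : Odd (a k)) (heven : Even (b j + b k)) :
    ∃ a' b' : Fin n → ℤ,
      (∀ l, cs ^ p *
        ((levelOp ![j,k] Fmat).mulVec ((levelOp ![j,k] Fmat).mulVec v)) l = a' l + b' l * cs) ∧
      Even (a' j) ∧ Even (a' k) ∧ ∀ l, l ≠ j → l ≠ k → a' l = a l ∧ b' l = b l := by
  obtain ⟨mj, hmj⟩ := hja
  obtain ⟨mk, hmk⟩ := hka
  obtain ⟨mb, hmb⟩ := heven
  have hbj : b j = 2*mb - b k := by omega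
  refine ⟨(fun l => if l = j then -2*mb else if l = k then 2*(b k) - 2*mb else a l),
          (fun l => if l = j then mj + mk + 1 else if l = k then mj - mk else b l),
          ?_, ?_, ?_, ?_⟩
  · intro l
    rcases eq_or_ne l j with rfl | hlj
    · rw [mulVec_levelOp_two l k hjk, mulVec_levelOp_two l k hjk, mulVec_levelOp_two l k hjk]
      simp only [if_pos rfl, ite_true, if_neg hjk, if_neg hjk.symm, Fmat00, Fmat01, Fmat10, Fmat11]
      rw [lin4 (hv l) (hv k)]
      have pj : (a l : ℂ) = 2*(mj:ℂ) + 1 := by exact_mod_cast congrArg (Int.cast : ℤ → ℂ) hmj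
      have pk : (a k : ℂ) = 2*(mk:ℂ) + 1 := by exact_mod_cast congrArg (Int.cast : ℤ → ℂ) hmk
      have pbj : (b l : ℂ) = 2*(mb:ℂ) - (b k : ℂ) := by
        exact_mod_cast congrArg (Int.cast : ℤ → ℂ) hbj
      rw [pj, pk, pbj]
      push_cast
      linear_combination (((2*(mb:ℂ) - (b k:ℂ))/4)*cs + ((2*(mj:ℂ)+1)/4 + (2*(mb:ℂ) - (b k:ℂ))/2 + ((b k:ℂ))/2)) * cs_sq
    · rcases eq_or_ne l k with rfl | hlk
      · rw [mulVec_levelOp_two j l hjk, mulVec_levelOp_two j l hjk, mulVec_levelOp_two j l hjk]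
        simp only [if_neg hlj, if_pos rfl, ite_true, if_neg hjk, if_neg hjk.symm, Fmat00, Fmat01,
          Fmat10, Fmat11]
        rw [lin4 (hv j) (hv l)]
        have pj : (a j : ℂ) = 2*(mj:ℂ) + 1 := by exact_mod_cast congrArg (Int.cast : ℤ → ℂ) hmj
        have pk : (a l : ℂ) = 2*(mk:ℂ) + 1 := by exact_mod_cast congrArg (Int.cast : ℤ → ℂ) hmk
        have pbj : (b j : ℂ) = 2*(mb:ℂ) - (b l : ℂ) := by
          exact_mod_cast congrArg (Int.cast : ℤ → ℂ) hbj
        rw [pj, pk, pbj]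
        push_cast
        linear_combination (((b l:ℂ)/4)*cs + ((2*(mb:ℂ) - (b l:ℂ))/2 + (2*(mk:ℂ)+1)/4 - ((b l:ℂ))/2)) * cs_sq
      · simp only [if_neg hlj, if_neg hlk]
        rw [mulVec_levelOp_two j k hjk, if_neg hlj, if_neg hlk,
          mulVec_levelOp_two j k hjk, if_neg hlj, if_neg hlk]
        exact hv l
  · simp only [if_pos rfl, ite_true]
    exact ⟨-mb, by ring⟩
  · simp only [if_neg hjk.symm, if_pos rfl, ite_true]
    exact ⟨b k - mb, by ring⟩
  · intro l hlj hlk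
    simp [hlj, hlk]

lemma pairReduce {n : ℕ} {p : ℕ} (j k : Fin n) (hjk : j ≠ k) (v : Fin n → ℂ)
    (a b : Fin n → ℤ) (hv : ∀ l, cs ^ p * v l = a l + b l * cs)
    (hja : Odd (a j)) (hka : Odd (a k)) :
    ∃ L : List (Matrix (Fin n) (Fin n) ℂ), (∀ G ∈ L, IsImGen G) ∧
      ∃ a' b' : Fin n → ℤ,
        (∀ l, cs ^ p * (L.prod.mulVec v) l = a' l + b' l * cs) ∧
        Even (a' j) ∧ Even (a' k) ∧ ∀ l, l ≠ j → l ≠ k → a' l = a l ∧ b' l = b l := by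
  rcases Int.even_or_odd (b j + b k) with hbe | hbo
  · -- same parity: F twice
    obtain ⟨a', b', h1, h2, h3, h4⟩ := pairFF j k hjk v a b hv hja hka hbe
    refine ⟨[levelOp ![j,k] Fmat, levelOp ![j,k] Fmat], ?_, a', b', ?_, h2, h3, h4⟩
    · intro G hG
      rcases List.mem_cons.mp hG with rfl | hG
      · exact Or.inr (Or.inr ⟨j, k, hjk, rfl⟩)
      · rcases List.mem_cons.mp hG with rfl | hG
        · exact Or.inr (Or.inr ⟨j, k, hjk, rfl⟩)
        · exact absurd hG List.not_mem_nil
    · intro l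
      have hprod : ([levelOp ![j,k] Fmat, levelOp ![j,k] Fmat].prod : Matrix (Fin n) (Fin n) ℂ)
          = levelOp ![j,k] Fmat * levelOp ![j,k] Fmat := by simp
      rw [hprod, ← Matrix.mulVec_mulVec]
      exact h1 l
  · -- mixed parity: single F, oriented by the mod-4 condition
    obtain ⟨mj, hmj⟩ := hja
    obtain ⟨mk, hmk⟩ := hka
    obtain ⟨mb, hmb⟩ := hbo
    rcases Int.even_or_odd ((a j + a k + 2 * b j) / 2) with h4j | h4k
    · have h4 : (4:ℤ) ∣ (a j + a k + 2 * b j) := by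
        obtain ⟨c, hc⟩ := h4j; omega
      obtain ⟨a', b', h1, h2, h3, h4'⟩ := pairF j k hjk v a b hv ⟨mj, hmj⟩ ⟨mk, hmk⟩ ⟨mb, hmb⟩ h4
      refine ⟨[levelOp ![j,k] Fmat], ?_, a', b', ?_, h2, h3, h4'⟩
      · intro G hG
        rcases List.mem_cons.mp hG with rfl | hG
        · exact Or.inr (Or.inr ⟨j, k, hjk, rfl⟩)
        · exact absurd hG List.not_mem_nil
      · intro l
        have hprod : ([levelOp ![j,k] Fmat].prod : Matrix (Fin n) (Fin n) ℂ)
            = levelOp ![j,k] Fmat := by simp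
        rw [hprod]; exact h1 l
    · have h4 : (4:ℤ) ∣ (a k + a j + 2 * b k) := by
        obtain ⟨c, hc⟩ := h4k; omega
      obtain ⟨a', b', h1, h2, h3, h4'⟩ := pairF k j hjk.symm v a b hv ⟨mk, hmk⟩ ⟨mj, hmj⟩
        ⟨mb, by omega⟩ h4
      refine ⟨[levelOp ![k,j] Fmat], ?_, a', b', ?_, h3, h2, fun l hlj hlk => h4' l hlk hlj⟩
      · intro G hG
        rcases List.mem_cons.mp hG with rfl | hG
        · exact Or.inr (Or.inr ⟨k, j, hjk.symm, rfl⟩)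
        · exact absurd hG List.not_mem_nil
      · intro l
        have hprod : ([levelOp ![k,j] Fmat].prod : Matrix (Fin n) (Fin n) ℂ)
            = levelOp ![k,j] Fmat := by simp
        rw [hprod]; exact h1 l

lemma key {n : ℕ} (p : ℕ) (m : ℕ) : ∀ (v : Fin n → ℂ) (a b : Fin n → ℤ),
    (∀ l, cs ^ (p+1) * v l = a l + b l * cs) →
    (Finset.univ.filter (fun l => Odd (a l))).card = m → Even m →
    ∃ L : List (Matrix (Fin n) (Fin n) ℂ), (∀ G ∈ L, IsImGen G) ∧
      ∀ l, ∃ A B : ℤ, cs ^ p * (L.prod.mulVec v) l = A + B * cs := by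
  induction m using Nat.strong_induction_on with
  | _ m ih =>
    intro v a b hv hcard hev
    rcases Nat.eq_zero_or_pos m with rfl | hm
    · -- base case: all real parts even
      refine ⟨[], fun G hG => absurd hG List.not_mem_nil, ?_⟩
      intro l
      have hno : ¬ Odd (a l) := by
        intro hodd
        have : l ∈ Finset.univ.filter (fun l => Odd (a l)) := by
          simp [hodd]
        rw [Finset.card_eq_zero] at hcard
        simp [hcard] at this
      obtain ⟨c, hc⟩ := Int.not_odd_iff_even.mp hno
      refine ⟨b l, -c, mul_left_cancel₀ cs_ne ?_⟩
      have h1 := hv l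
      have pc : (a l : ℂ) = (c : ℂ) + c := by exact_mod_cast congrArg (Int.cast : ℤ → ℂ) hc
      simp only [List.prod_nil, Matrix.one_mulVec]
      push_cast
      linear_combination h1 + pc + (c:ℂ) * cs_sq
    · -- m ≥ 2 : pick two odd entries
      have hm2 : 2 ≤ m := by
        obtain ⟨r, rfl⟩ := hev; omega
      rw [← hcard] at hm2
      have h1lt : 1 < (Finset.univ.filter (fun l => Odd (a l))).card := by omega
      obtain ⟨j, hj, k, hk, hjk⟩ := Finset.one_lt_card.mp h1lt
      have hja : Odd (a j) := (Finset.mem_filter.mp hj).2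
      have hka : Odd (a k) := (Finset.mem_filter.mp hk).2
      obtain ⟨L₁, hL₁, a', b', hv', hevj, hevk, hfix⟩ :=
        pairReduce j k hjk v a b hv hja hka
      -- the new odd set
      have hset : Finset.univ.filter (fun l => Odd (a' l)) =
          ((Finset.univ.filter (fun l => Odd (a l))).erase j).erase k := by
        ext l
        simp only [Finset.mem_filter, Finset.mem_erase, Finset.mem_univ, true_and]
        constructor
        · intro hodd
          have hlj : l ≠ j := by rintro rfl; exact (Int.not_odd_iff_even.mpr hevj) hodd
          have hlk : l ≠ k := by rintro rfl; exact (Int.not_odd_iff_even.mpr hevk) hodd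
          exact ⟨hlk, hlj, by rw [← (hfix l hlj hlk).1]; exact hodd⟩
        · rintro ⟨hlk, hlj, hodd⟩
          rw [(hfix l hlj hlk).1]; exact hodd
      have hkmem : k ∈ (Finset.univ.filter (fun l => Odd (a l))).erase j :=
        Finset.mem_erase.mpr ⟨hjk.symm, hk⟩
      have hcard' : (Finset.univ.filter (fun l => Odd (a' l))).card = m - 2 := by
        rw [hset, Finset.card_erase_of_mem hkmem, Finset.card_erase_of_mem hj, hcard]
        omega
      have hev' : Even (m - 2) := by
        obtain ⟨r, rfl⟩ := hev
        exact ⟨r - 1, by omega⟩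
      obtain ⟨L₂, hL₂, hred⟩ := ih (m - 2) (by omega) (L₁.prod.mulVec v) a' b' hv' hcard' hev'
      refine ⟨L₂ ++ L₁, ?_, ?_⟩
      · intro G hG
        rcases List.mem_append.mp hG with h | h
        · exact hL₂ G h
        · exact hL₁ G h
      · intro l
        rw [List.prod_append, ← Matrix.mulVec_mulVec]
        exact hred l

lemma mono_step {p : ℕ} {x : ℂ} (h : ∃ A B : ℤ, cs ^ p * x = A + B * cs) :
    ∃ A B : ℤ, cs ^ (p+1) * x = A + B * cs := by
  obtain ⟨A, B, h⟩ := h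
  refine ⟨-2*B, A, ?_⟩
  push_cast
  linear_combination cs * h + (B:ℂ) * cs_sq

lemma exists_exp {x : ℂ} (hx : InDIrt2 x) :
    ∃ g, ∀ p, g ≤ p → ∃ A B : ℤ, cs ^ p * x = A + B * cs := by
  obtain ⟨x₀, x₁, ⟨u, e, rfl⟩, ⟨w, f, rfl⟩, rfl⟩ := hx
  refine ⟨2*(e+f), ?_⟩
  have base : ∃ A B : ℤ, cs ^ (2*(e+f)) * ((u:ℂ)/2^e + ((w:ℂ)/2^f) * (Complex.I * Real.sqrt 2))
      = A + B * cs := by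
    refine ⟨(-1)^(e+f) * 2^f * u, (-1)^(e+f) * 2^e * w, ?_⟩
    have h2 : cs ^ (2*(e+f)) = ((-2 : ℂ))^(e+f) := by rw [pow_mul, cs_sq]
    have hcs : (Complex.I * (Real.sqrt 2 : ℝ) : ℂ) = cs := rfl
    rw [h2, hcs, neg_pow, pow_add (2:ℂ)]
    push_cast
    have h2e : ((2:ℂ))^e ≠ 0 := pow_ne_zero _ two_ne_zero
    have h2f : ((2:ℂ))^f ≠ 0 := pow_ne_zero _ two_ne_zero
    field_simp
  intro p hp
  induction p, hp using Nat.le_induction with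
  | base => exact base
  | succ p hp ih => exact mono_step ih

/-- A unit vector over `ℤ[1/(i√2)]` with positive least i√2-denominator
exponent can have its exponent strictly reduced by generators `(-1)_[a]`,
`X_[a,b]`, `F_[a,b]`. -/
theorem stmt16 (n : ℕ) (hn : 1 ≤ n) (v : Fin n → ℂ)
    (hunit : ∑ j, (starRingEnd ℂ) (v j) * v j = 1)
    (hR : ∀ j, InDIrt2 (v j))
    (hlde : 0 < ldeIrt2 v) :
    ∃ L : List (Matrix (Fin n) (Fin n) ℂ),
      (∀ G ∈ L, IsImGen G) ∧ ldeIrt2 (L.prod.mulVec v) < ldeIrt2 v := by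
  classical
  have hcs : (Complex.I * (Real.sqrt 2 : ℝ) : ℂ) = cs := rfl
  have hex : ∀ j, ∃ g, ∀ p, g ≤ p → ∃ A B : ℤ, cs ^ p * v j = A + B * cs :=
    fun j => exists_exp (hR j)
  choose g hg using hex
  have hQmem : (Finset.univ.sup g) ∈ {q : ℕ | ∀ j, ∃ a b : ℤ,
      (Complex.I * Real.sqrt 2) ^ q * v j = (a : ℂ) + (b : ℂ) * (Complex.I * Real.sqrt 2)} := by
    intro j
    rw [hcs]
    exact hg j _ (Finset.le_sup (Finset.mem_univ j))
  have hmem : ∀ j, ∃ A B : ℤ, (Complex.I * (Real.sqrt 2:ℝ)) ^ (ldeIrt2 v) * v j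
      = (A:ℂ) + (B:ℂ) * (Complex.I * (Real.sqrt 2:ℝ)) := Nat.sInf_mem ⟨_, hQmem⟩
  choose a b hab using hmem
  obtain ⟨p, hp⟩ : ∃ p, ldeIrt2 v = p + 1 := ⟨ldeIrt2 v - 1, by omega⟩
  have hv : ∀ l, cs ^ (p+1) * v l = (a l : ℂ) + (b l : ℂ) * cs := by
    intro l
    have := hab l
    rw [hp] at this
    exact this
  -- squared-norm identity
  have h2cs : Complex.normSq cs = 2 := by
    simp only [cs, Complex.normSq_apply, Complex.mul_re, Complex.mul_im, Complex.I_re,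
      Complex.I_im, Complex.ofReal_re, Complex.ofReal_im]
    have := Real.sq_sqrt (by norm_num : (2:ℝ) ≥ 0)
    nlinarith [this]
  have hnsq : ∀ j, ((a j : ℝ)^2 + 2*(b j : ℝ)^2) = (2:ℝ)^(p+1) * Complex.normSq (v j) := by
    intro j
    have h1 : Complex.normSq (cs ^ (p+1) * v j)
        = Complex.normSq ((a j : ℂ) + (b j : ℂ) * cs) := congrArg _ (hv j)
    rw [Complex.normSq_mul, map_pow Complex.normSq, h2cs] at h1
    rw [h1]
    have hre : ((a j : ℂ) + (b j : ℂ) * cs).re = (a j : ℝ) := by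
      simp [cs, Complex.add_re, Complex.mul_re, Complex.mul_im]
    have him : ((a j : ℂ) + (b j : ℂ) * cs).im = (b j : ℝ) * Real.sqrt 2 := by
      simp [cs, Complex.add_im, Complex.mul_re, Complex.mul_im]
    rw [Complex.normSq_apply, hre, him]
    have := Real.sq_sqrt (by norm_num : (2:ℝ) ≥ 0)
    nlinarith [this]
  have hsumnorm : ∑ j, (Complex.normSq (v j) : ℝ) = 1 := by
    have h1 : ((∑ j, (Complex.normSq (v j) : ℝ) : ℝ) : ℂ) = 1 := by
      push_cast
      simp only [Complex.normSq_eq_conj_mul_self]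
      exact hunit
    exact_mod_cast h1
  have hsum : ∑ j, ((a j)^2 + 2*(b j)^2) = 2^(p+1) := by
    have hr : ∑ j, ((a j:ℝ)^2 + 2*(b j:ℝ)^2) = (2:ℝ)^(p+1) := by
      rw [Finset.sum_congr rfl (fun j _ => hnsq j), ← Finset.mul_sum, hsumnorm, mul_one]
    exact_mod_cast hr
  -- parity of the odd set
  have heven : Even (Finset.univ.filter (fun l => Odd (a l))).card := by
    have h1 : ((∑ j, ((a j)^2 + 2*(b j)^2) : ℤ) : ZMod 2) = 0 := by
      rw [hsum]
      push_cast
      rw [pow_succ]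
      simp [show ((2:ZMod 2)) = 0 from rfl]
    push_cast at h1
    have h2 : ∀ j : Fin n, ((a j : ZMod 2))^2 + 2*((b j : ZMod 2))^2
        = if Odd (a j) then (1 : ZMod 2) else 0 := by
      intro j
      have hx : ((a j : ZMod 2)) = if Odd (a j) then 1 else 0 := by
        rcases Int.even_or_odd (a j) with ⟨c, hc⟩ | ⟨c, hc⟩
        · rw [if_neg (by rw [Int.not_odd_iff_even]; exact ⟨c, hc⟩), hc]
          push_cast
          ring_nf
          simp [show ((2:ZMod 2)) = 0 from rfl]
        · rw [if_pos ⟨c, hc⟩, hc]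
          push_cast
          ring_nf
          simp [show ((2:ZMod 2)) = 0 from rfl]
      rw [hx]
      split_ifs <;> simp [show ((2:ZMod 2)) = 0 from rfl]
    rw [Finset.sum_congr rfl (fun j _ => h2 j), Finset.sum_boole] at h1
    have hdvd : 2 ∣ (Finset.univ.filter (fun l => Odd (a l))).card :=
      (ZMod.natCast_eq_zero_iff _ 2).mp h1
    exact even_iff_two_dvd.mpr hdvd
  obtain ⟨L, hLgen, hLred⟩ := key p _ v a b hv rfl heven
  refine ⟨L, hLgen, ?_⟩
  have hle : ldeIrt2 (L.prod.mulVec v) ≤ p := by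
    apply Nat.sInf_le
    intro j
    obtain ⟨A, B, hAB⟩ := hLred j
    exact ⟨A, B, hAB⟩
  omega
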